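/- Let 0 ≤ r ≤ 1. Then inf over |z| = r of |cos(π/3) + cosh(2π√(1/54)·√(1−(1−z²)²))| equals cos(π/3) + cos((2π/√54)·√((1/2)(√(4r⁴+4r⁶+r⁸) + 2r² + r⁴))). In particular this infimum is strictly positive for 0 ≤ r < 1. -/

import Mathlib

open Complex Real

lemma cosh_re' (z : ℂ) : (Complex.cosh z).re = Real.cosh z.re * Real.cos z.im := by
  simp [Complex.cosh, Complex.exp_re, Real.cosh_eq, Complex.div_re]
  ring

lemma neg_cpow_half (t : ℝ) (ht : 0 ≤ t) :
    (-(t:ℂ)) ^ ((1:ℂ)/2) = Real.sqrt t * I := by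
  rcases eq_or_lt_of_le ht with h | h
  · simp [← h, Complex.zero_cpow (by norm_num : (1:ℂ)/2 ≠ 0)]
  · have hne : (-(t:ℂ)) ≠ 0 := by simpa using h.ne'
    rw [Complex.cpow_def_of_ne_zero hne]
    have hlog : Complex.log (-(t:ℂ)) = Real.log t + Real.pi * I := by
      apply Complex.ext
      · simp [Complex.log_re, abs_of_pos h]
      · simp only [Complex.log_im, Complex.add_im, Complex.ofReal_im,
          Complex.mul_im, Complex.I_im, Complex.I_re, Complex.ofReal_re]
        rw [show (-(t:ℂ)) = ((-t:ℝ):ℂ) by push_cast; ring,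
          Complex.arg_ofReal_of_neg (by linarith)]
        ring
    rw [hlog]
    have h2 : (↑(Real.log t) + ↑Real.pi * I) * (1/2)
        = ↑(Real.log t / 2) + ↑(Real.pi/2) * I := by push_cast; ring
    rw [h2, Complex.exp_add, Complex.exp_mul_I]
    have h3 : Complex.cos ↑(Real.pi/2) = 0 := by
      rw [← Complex.ofReal_cos, Real.cos_pi_div_two]; simp
    have h4 : Complex.sin ↑(Real.pi/2) = 1 := by
      rw [← Complex.ofReal_sin, Real.sin_pi_div_two]; simp
    rw [h3, h4, ← Complex.ofReal_exp]
    have h5 : Real.exp (Real.log t / 2) = Real.sqrt t := by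
      rw [Real.sqrt_eq_rpow, Real.rpow_def_of_pos h]; ring_nf
    rw [h5]; ring


theorem inf_abs_cosh_term (r : ℝ) (hr0 : 0 ≤ r) (hr1 : r ≤ 1) :
    (sInf {y : ℝ | ∃ z : ℂ, ‖z‖ = r ∧
        y = ‖(Complex.cos (Real.pi / 3) +
          Complex.cosh (2 * Real.pi * Real.sqrt (1 / 54) *
            (1 - (1 - z ^ 2) ^ 2) ^ ((1 : ℂ) / 2)))‖} =
      Real.cos (Real.pi / 3) +
        Real.cos (2 * Real.pi / Real.sqrt 54 *
          Real.sqrt (1 / 2 * (Real.sqrt (4 * r ^ 4 + 4 * r ^ 6 + r ^ 8) + 2 * r ^ 2 + r ^ 4)))) ∧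
    (r < 1 →
      0 < sInf {y : ℝ | ∃ z : ℂ, ‖z‖ = r ∧
        y = ‖(Complex.cos (Real.pi / 3) +
          Complex.cosh (2 * Real.pi * Real.sqrt (1 / 54) *
            (1 - (1 - z ^ 2) ^ 2) ^ ((1 : ℂ) / 2)))‖}) := by
  set S := {y : ℝ | ∃ z : ℂ, ‖z‖ = r ∧
        y = ‖(Complex.cos (Real.pi / 3) +
          Complex.cosh (2 * Real.pi * Real.sqrt (1 / 54) *
            (1 - (1 - z ^ 2) ^ 2) ^ ((1 : ℂ) / 2)))‖} with hS
  set t : ℝ := 2 * r ^ 2 + r ^ 4 with ht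
  set c : ℝ := 2 * Real.pi / Real.sqrt 54 with hcdef
  have ht0 : 0 ≤ t := by positivity
  have h54 : (0:ℝ) < Real.sqrt 54 := Real.sqrt_pos.mpr (by norm_num)
  have hpi := Real.pi_pos
  have hc0 : 0 ≤ c := by positivity
  -- the scalar 2π√(1/54) equals c
  have hscal : 2 * Real.pi * Real.sqrt (1 / 54) = c := by
    rw [hcdef, one_div, Real.sqrt_inv, div_eq_mul_inv]
  -- RHS simplification
  have hrhs : Real.cos (Real.pi / 3) +
        Real.cos (2 * Real.pi / Real.sqrt 54 *
          Real.sqrt (1 / 2 * (Real.sqrt (4 * r ^ 4 + 4 * r ^ 6 + r ^ 8) + 2 * r ^ 2 + r ^ 4)))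
      = 1 / 2 + Real.cos (c * Real.sqrt t) := by
    rw [Real.cos_pi_div_three]
    congr 2
    rw [show 4 * r ^ 4 + 4 * r ^ 6 + r ^ 8 = (2 * r ^ 2 + r ^ 4) ^ 2 by ring,
      Real.sqrt_sq ht0]
    congr 1
    rw [ht]; ring_nf
  set B : ℝ := 1 / 2 + Real.cos (c * Real.sqrt t) with hB
  -- bound c√t < π/2
  have htle : Real.sqrt t ≤ Real.sqrt 3 :=
    Real.sqrt_le_sqrt (by
      have h2 : r ^ 2 ≤ 1 := pow_le_one₀ hr0 hr1
      have h4 : r ^ 4 ≤ 1 := pow_le_one₀ hr0 hr1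
      rw [ht]; linarith)
  have h48 : (4:ℝ) * Real.sqrt 3 < Real.sqrt 54 := by
    have : (4:ℝ) * Real.sqrt 3 = Real.sqrt 48 := by
      rw [show (48:ℝ) = 4 ^ 2 * 3 by norm_num, Real.sqrt_mul (by positivity),
        Real.sqrt_sq (by norm_num)]
    rw [this]
    exact Real.sqrt_lt_sqrt (by norm_num) (by norm_num)
  have hT : c * Real.sqrt t < Real.pi / 2 := by
    rw [hcdef, div_mul_eq_mul_div, div_lt_iff₀ h54]
    nlinarith [Real.sqrt_nonneg t, Real.sqrt_nonneg 3]
  have hT0 : 0 ≤ c * Real.sqrt t := by positivity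
  have hcos_pos : 0 < Real.cos (c * Real.sqrt t) :=
    Real.cos_pos_of_mem_Ioo ⟨by linarith, hT⟩
  have hB0 : 0 < B := by rw [hB]; linarith
  -- lower bound: every element of S is ≥ B
  have hlow : ∀ y ∈ S, B ≤ y := by
    rintro y ⟨z, hz, rfl⟩
    set ζ : ℂ := 2 * Real.pi * Real.sqrt (1 / 54) * (1 - (1 - z ^ 2) ^ 2) ^ ((1 : ℂ) / 2) with hζ
    have habsw : ‖(1 - (1 - z ^ 2) ^ 2 : ℂ)‖ ≤ t := by
      rw [show (1 - (1 - z ^ 2) ^ 2 : ℂ) = z ^ 2 * (2 - z ^ 2) by ring, norm_mul, norm_pow, hz]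
      have h1 : ‖(2 - z ^ 2 : ℂ)‖ ≤ 2 + r ^ 2 := by
        calc ‖(2 - z ^ 2 : ℂ)‖ ≤ ‖(2 : ℂ)‖ + ‖z ^ 2‖ := by
                            exact norm_sub_le _ _
          _ = 2 + r ^ 2 := by rw [norm_pow, hz]; simp
      nlinarith [norm_nonneg (2 - z ^ 2), sq_nonneg r]
    have habsζ : ‖ζ‖ ≤ c * Real.sqrt t := by
      rw [hζ, norm_mul]
      have h2 : ‖(2 * (Real.pi:ℂ) * (Real.sqrt (1 / 54):ℂ))‖ = c := by
        rw [show (2 * (Real.pi:ℂ) * (Real.sqrt (1 / 54):ℂ))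
            = ((2 * Real.pi * Real.sqrt (1 / 54) : ℝ) : ℂ) by push_cast; ring,
          Complex.norm_real, Real.norm_eq_abs, _root_.abs_of_nonneg (by positivity), hscal]
      rw [h2]
      have h3 : ‖((1 - (1 - z ^ 2) ^ 2) ^ ((1 : ℂ) / 2))‖
          = ‖(1 - (1 - z ^ 2) ^ 2 : ℂ)‖ ^ ((1:ℝ) / 2) := by
        rw [show ((1:ℂ)/2) = (((1:ℝ)/2 : ℝ) : ℂ) by push_cast; ring]
        exact Complex.norm_cpow_real _ _
      rw [h3]
      have h4 : ‖(1 - (1 - z ^ 2) ^ 2 : ℂ)‖ ^ ((1:ℝ) / 2) ≤ Real.sqrt t := by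
        rw [Real.sqrt_eq_rpow]
        exact Real.rpow_le_rpow (norm_nonneg _) habsw (by norm_num)
      exact mul_le_mul_of_nonneg_left h4 hc0
    have him : |ζ.im| ≤ c * Real.sqrt t := (Complex.abs_im_le_norm ζ).trans habsζ
    have hcosim : Real.cos (c * Real.sqrt t) ≤ Real.cos ζ.im := by
      rw [← Real.cos_abs ζ.im]
      exact Real.cos_le_cos_of_nonneg_of_le_pi (_root_.abs_nonneg _) (by linarith) him
    have hre : (Complex.cos (Real.pi / 3 : ℂ) + Complex.cosh ζ).re
        = 1 / 2 + Real.cosh ζ.re * Real.cos ζ.im := by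
      rw [Complex.add_re, cosh_re']
      congr 1
      rw [show ((Real.pi : ℂ) / 3) = ((Real.pi / 3 : ℝ) : ℂ) by push_cast; ring,
        ← Complex.ofReal_cos, Real.cos_pi_div_three, Complex.ofReal_re]
    calc B ≤ (Complex.cos (Real.pi / 3 : ℂ) + Complex.cosh ζ).re := by
          rw [hre, hB]
          have h5 := Real.one_le_cosh ζ.re
          have h6 : 0 < Real.cos ζ.im := lt_of_lt_of_le hcos_pos hcosim
          nlinarith
      _ ≤ ‖(Complex.cos (Real.pi / 3 : ℂ) + Complex.cosh ζ)‖ :=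
          Complex.re_le_norm _
  -- membership : value at z = r * I equals B
  have hmem : B ∈ S := by
    refine ⟨(r : ℂ) * I, ?_, ?_⟩
    · rw [norm_mul, Complex.norm_real, Complex.norm_I, Real.norm_eq_abs, _root_.abs_of_nonneg hr0, mul_one]
    · have h1 : (1 - (1 - ((r:ℂ) * I) ^ 2) ^ 2) = -(t:ℂ) := by
        rw [mul_pow, Complex.I_sq]
        push_cast [ht]
        ring
      rw [h1, neg_cpow_half t ht0]
      have h2 : (2 * (Real.pi:ℂ) * (Real.sqrt (1/54):ℂ)) * ((Real.sqrt t : ℂ) * I)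
          = ((c * Real.sqrt t : ℝ) : ℂ) * I := by
        push_cast [← hscal]
        ring
      rw [h2, Complex.cosh_mul_I, ← Complex.ofReal_cos]
      rw [show ((Real.pi : ℂ) / 3) = ((Real.pi / 3 : ℝ) : ℂ) by push_cast; ring,
        ← Complex.ofReal_cos, Real.cos_pi_div_three, ← Complex.ofReal_add,
        Complex.norm_real, Real.norm_eq_abs, ← hB, _root_.abs_of_pos hB0]
  have hbdd : BddBelow S := ⟨B, hlow⟩
  have heq : sInf S = B :=
    le_antisymm (csInf_le hbdd hmem) (le_csInf ⟨B, hmem⟩ hlow)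
  rw [hrhs]
  exact ⟨heq, fun _ => heq ▸ hB0⟩
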